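/- (Explicit rational harmonic morphism on ℝ⁶.) Let U = {q ∈ ℂ³ : (q̄¹)² + q̄¹q̄² + q̄³ ≠ 0} and define z¹ : U → ℂ by z¹(q) = (−q³(q̄¹ + q̄²) + q¹ − q²) / ((q̄¹)² + q̄¹q̄² + q̄³). Then Δz¹ = 0 and Σ_{i=1}^{6} (∂z¹/∂x^i)² = 0 at every point of U; i.e. z¹ is a harmonic morphism from U to ℂ. -/

import Mathlib

open Complex BigOperators Matrix

/-- Partial derivative in the direction of the real coordinate `x^{2j-1}`,
identifying `ℝ^{2m} ≅ ℂ^m` via `q^j = x^{2j-1} + i x^{2j}`. -/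
noncomputable def pdRe {m : ℕ} (f : (Fin m → ℂ) → ℂ) (j : Fin m) (x : Fin m → ℂ) : ℂ :=
  fderiv ℝ f x (Pi.single j 1)

/-- Partial derivative in the direction of the real coordinate `x^{2j}`. -/
noncomputable def pdIm {m : ℕ} (f : (Fin m → ℂ) → ℂ) (j : Fin m) (x : Fin m → ℂ) : ℂ :=
  fderiv ℝ f x (Pi.single j Complex.I)

/-- Wirtinger derivative `∂f/∂q^j = ½(∂f/∂x^{2j-1} − i ∂f/∂x^{2j})`. -/
noncomputable def wdq {m : ℕ} (f : (Fin m → ℂ) → ℂ) (j : Fin m) (x : Fin m → ℂ) : ℂ :=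
  (pdRe f j x - Complex.I * pdIm f j x) / 2

/-- Wirtinger derivative `∂f/∂q̄^j = ½(∂f/∂x^{2j-1} + i ∂f/∂x^{2j})`. -/
noncomputable def wdqbar {m : ℕ} (f : (Fin m → ℂ) → ℂ) (j : Fin m) (x : Fin m → ℂ) : ℂ :=
  (pdRe f j x + Complex.I * pdIm f j x) / 2

/-- Laplacian `Δf = Σ_{i=1}^{2m} ∂²f/(∂x^i)²`. -/
noncomputable def lap {m : ℕ} (f : (Fin m → ℂ) → ℂ) (x : Fin m → ℂ) : ℂ :=
  ∑ j, (pdRe (fun y => pdRe f j y) j x + pdIm (fun y => pdIm f j y) j x)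

/-- The horizontal weak conformality quantity `Σ_{i=1}^{2m} (∂f/∂x^i)²`. -/
noncomputable def hwc {m : ℕ} (f : (Fin m → ℂ) → ℂ) (x : Fin m → ℂ) : ℂ :=
  ∑ j, ((pdRe f j x) ^ 2 + (pdIm f j x) ^ 2)

/-- The rational map `z¹(q) = (−q³(q̄¹ + q̄²) + q¹ − q²)/((q̄¹)² + q̄¹q̄² + q̄³)`
on `ℂ³` (0-based indices). -/
noncomputable def zRational : (Fin 3 → ℂ) → ℂ :=
  fun q =>
    (-(q 2) * (starRingEnd ℂ (q 0) + starRingEnd ℂ (q 1)) + q 0 - q 1) /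
      ((starRingEnd ℂ (q 0)) ^ 2 + starRingEnd ℂ (q 0) * starRingEnd ℂ (q 1)
        + starRingEnd ℂ (q 2))

namespace RHMaux

noncomputable def cP (j : Fin 3) : (Fin 3 → ℂ) →L[ℝ] ℂ := ContinuousLinearMap.proj j
noncomputable def cC (j : Fin 3) : (Fin 3 → ℂ) →L[ℝ] ℂ :=
  (Complex.conjCLE.toContinuousLinearMap).comp (ContinuousLinearMap.proj j)

lemma hasF_coord (j : Fin 3) (q : Fin 3 → ℂ) :
    HasFDerivAt (fun y : Fin 3 → ℂ => y j) (cP j) q := (cP j).hasFDerivAt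

lemma hasF_conj (j : Fin 3) (q : Fin 3 → ℂ) :
    HasFDerivAt (fun y : Fin 3 → ℂ => starRingEnd ℂ (y j)) (cC j) q := (cC j).hasFDerivAt

@[simp] lemma cP_apply (j : Fin 3) (v : Fin 3 → ℂ) : cP j v = v j := rfl
@[simp] lemma cC_apply (j : Fin 3) (v : Fin 3 → ℂ) : cC j v = starRingEnd ℂ (v j) := rfl

/-- Generic quotient rule for a directional derivative value. -/
lemma pd_div {P D : (Fin 3 → ℂ) → ℂ} {LP LD : (Fin 3 → ℂ) →L[ℝ] ℂ} {q v : Fin 3 → ℂ}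
    (hP : HasFDerivAt P LP q) (hD : HasFDerivAt D LD q) (hq : D q ≠ 0) :
    fderiv ℝ (fun y => P y / D y) q v = (LP v * D q - P q * LD v) / D q ^ 2 := by
  have h3 : HasFDerivAt (fun y => P y / D y)
      (P q • (-ContinuousLinearMap.mulLeftRight ℝ ℂ (D q)⁻¹ (D q)⁻¹).comp LD
        + (D q)⁻¹ • LP) q := by
    simpa only [div_eq_mul_inv, Function.comp_apply] using hP.fun_mul ((hasFDerivAt_inv' hq).comp q hD)
  rw [h3.fderiv]
  simp only [ContinuousLinearMap.add_apply, ContinuousLinearMap.smul_apply,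
    ContinuousLinearMap.comp_apply, ContinuousLinearMap.neg_apply,
    ContinuousLinearMap.mulLeftRight_apply, smul_eq_mul]
  field_simp; ring

noncomputable def Nn (q : Fin 3 → ℂ) : ℂ :=
  -(q 2) * (starRingEnd ℂ (q 0) + starRingEnd ℂ (q 1)) + q 0 - q 1
noncomputable def Dd (q : Fin 3 → ℂ) : ℂ :=
  (starRingEnd ℂ (q 0)) ^ 2 + starRingEnd ℂ (q 0) * starRingEnd ℂ (q 1) + starRingEnd ℂ (q 2)

lemma hNn (q : Fin 3 → ℂ) : HasFDerivAt Nn (((-(q 2)) • (cC 0 + cC 1) +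
      (starRingEnd ℂ (q 0) + starRingEnd ℂ (q 1)) • (-(cP 2)) + cP 0) - cP 1) q :=
  (((hasF_coord 2 q).neg.mul ((hasF_conj 0 q).add (hasF_conj 1 q))).add
      (hasF_coord 0 q)).sub (hasF_coord 1 q)

noncomputable def LDd (q : Fin 3 → ℂ) : (Fin 3 → ℂ) →L[ℝ] ℂ :=
  (starRingEnd ℂ (q 0) • cC 0 + starRingEnd ℂ (q 0) • cC 0
    + (starRingEnd ℂ (q 0) • cC 1 + starRingEnd ℂ (q 1) • cC 0)) + cC 2

lemma hDd (q : Fin 3 → ℂ) : HasFDerivAt Dd (LDd q) q := by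
  have := (((hasF_conj 0 q).fun_mul (hasF_conj 0 q)).fun_add
      ((hasF_conj 0 q).fun_mul (hasF_conj 1 q))).fun_add (hasF_conj 2 q)
  exact this.congr_of_eventuallyEq (Filter.Eventually.of_forall fun y => by simp only [Dd, pow_two])

lemma hDd2 (q : Fin 3 → ℂ) :
    HasFDerivAt (fun y => Dd y ^ 2) (Dd q • LDd q + Dd q • LDd q) q := by
  have := (hDd q).fun_mul (hDd q)
  simpa only [← pow_two] using this

lemma zR_eq : zRational = fun y => Nn y / Dd y := rfl

lemma pdRe_z0 {q : Fin 3 → ℂ} (hq : Dd q ≠ 0) :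
    fderiv ℝ zRational q (Pi.single 0 1) =
      ((1 - q 2) * Dd q - Nn q * (2 * starRingEnd ℂ (q 0) + starRingEnd ℂ (q 1)))
        / Dd q ^ 2 := by
  rw [zR_eq, pd_div (hNn q) (hDd q) hq]
  simp only [ContinuousLinearMap.add_apply, ContinuousLinearMap.sub_apply,
    ContinuousLinearMap.smul_apply, ContinuousLinearMap.neg_apply, cP_apply, cC_apply, LDd,
    smul_eq_mul, Pi.single_apply, _root_.map_one, map_zero, Complex.conj_I, Fin.reduceEq, reduceIte]
  ring

lemma pdIm_z0 {q : Fin 3 → ℂ} (hq : Dd q ≠ 0) :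
    fderiv ℝ zRational q (Pi.single 0 Complex.I) =
      (Complex.I * (1 + q 2) * Dd q
        + Complex.I * Nn q * (2 * starRingEnd ℂ (q 0) + starRingEnd ℂ (q 1))) / Dd q ^ 2 := by
  rw [zR_eq, pd_div (hNn q) (hDd q) hq]
  simp only [ContinuousLinearMap.add_apply, ContinuousLinearMap.sub_apply,
    ContinuousLinearMap.smul_apply, ContinuousLinearMap.neg_apply, cP_apply, cC_apply, LDd,
    smul_eq_mul, Pi.single_apply, _root_.map_one, map_zero, Complex.conj_I, Fin.reduceEq, reduceIte]
  ring

lemma pdRe_z1 {q : Fin 3 → ℂ} (hq : Dd q ≠ 0) :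
    fderiv ℝ zRational q (Pi.single 1 1) =
      ((-(q 2) - 1) * Dd q - Nn q * starRingEnd ℂ (q 0)) / Dd q ^ 2 := by
  rw [zR_eq, pd_div (hNn q) (hDd q) hq]
  simp only [ContinuousLinearMap.add_apply, ContinuousLinearMap.sub_apply,
    ContinuousLinearMap.smul_apply, ContinuousLinearMap.neg_apply, cP_apply, cC_apply, LDd,
    smul_eq_mul, Pi.single_apply, _root_.map_one, map_zero, Complex.conj_I, Fin.reduceEq, reduceIte]
  ring

lemma pdIm_z1 {q : Fin 3 → ℂ} (hq : Dd q ≠ 0) :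
    fderiv ℝ zRational q (Pi.single 1 Complex.I) =
      (Complex.I * (q 2 - 1) * Dd q + Complex.I * Nn q * starRingEnd ℂ (q 0)) / Dd q ^ 2 := by
  rw [zR_eq, pd_div (hNn q) (hDd q) hq]
  simp only [ContinuousLinearMap.add_apply, ContinuousLinearMap.sub_apply,
    ContinuousLinearMap.smul_apply, ContinuousLinearMap.neg_apply, cP_apply, cC_apply, LDd,
    smul_eq_mul, Pi.single_apply, _root_.map_one, map_zero, Complex.conj_I, Fin.reduceEq, reduceIte]
  ring

lemma pdRe_z2 {q : Fin 3 → ℂ} (hq : Dd q ≠ 0) :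
    fderiv ℝ zRational q (Pi.single 2 1) =
      (-(starRingEnd ℂ (q 0) + starRingEnd ℂ (q 1)) * Dd q - Nn q) / Dd q ^ 2 := by
  rw [zR_eq, pd_div (hNn q) (hDd q) hq]
  simp only [ContinuousLinearMap.add_apply, ContinuousLinearMap.sub_apply,
    ContinuousLinearMap.smul_apply, ContinuousLinearMap.neg_apply, cP_apply, cC_apply, LDd,
    smul_eq_mul, Pi.single_apply, _root_.map_one, map_zero, Complex.conj_I, Fin.reduceEq, reduceIte]
  ring

lemma pdIm_z2 {q : Fin 3 → ℂ} (hq : Dd q ≠ 0) :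
    fderiv ℝ zRational q (Pi.single 2 Complex.I) =
      (-Complex.I * (starRingEnd ℂ (q 0) + starRingEnd ℂ (q 1)) * Dd q
        + Complex.I * Nn q) / Dd q ^ 2 := by
  rw [zR_eq, pd_div (hNn q) (hDd q) hq]
  simp only [ContinuousLinearMap.add_apply, ContinuousLinearMap.sub_apply,
    ContinuousLinearMap.smul_apply, ContinuousLinearMap.neg_apply, cP_apply, cC_apply, LDd,
    smul_eq_mul, Pi.single_apply, _root_.map_one, map_zero, Complex.conj_I, Fin.reduceEq, reduceIte]
  ring

lemma Dd_cont : Continuous Dd := by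
  have h : ∀ j : Fin 3, Continuous fun y : Fin 3 → ℂ => starRingEnd ℂ (y j) :=
    fun j => Complex.continuous_conj.comp (continuous_apply j)
  exact (((h 0).pow 2).add ((h 0).mul (h 1))).add (h 2)

end RHMaux

set_option maxHeartbeats 2000000 in
/-- explicit rational harmonic morphism on `ℝ⁶`: on the open set
`U = {q : (q̄¹)² + q̄¹q̄² + q̄³ ≠ 0}` the map `zRational` satisfies `Δz¹ = 0`
and `Σ_{i=1}^6 (∂z¹/∂x^i)² = 0`, i.e. it is a harmonic morphism `U → ℂ`. -/
theorem rational_harmonic_morphism :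
    ∀ q : Fin 3 → ℂ,
      (starRingEnd ℂ (q 0)) ^ 2 + starRingEnd ℂ (q 0) * starRingEnd ℂ (q 1)
          + starRingEnd ℂ (q 2) ≠ 0 →
      lap zRational q = 0 ∧ hwc zRational q = 0 := by
  intro q hq
  have hq' : RHMaux.Dd q ≠ 0 := hq
  have hq2 : RHMaux.Dd q ^ 2 ≠ 0 := pow_ne_zero _ hq'
  open RHMaux in
  constructor
  · -- Laplacian
    have hev : ∀ᶠ y in nhds q, Dd y ≠ 0 := Dd_cont.continuousAt.eventually_ne hq'
    have e0 : (fun y => fderiv ℝ zRational y (Pi.single 0 1)) =ᶠ[nhds q]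
        (fun y => ((1 - y 2) * Dd y - Nn y * (2 * starRingEnd ℂ (y 0) + starRingEnd ℂ (y 1)))
          / Dd y ^ 2) := hev.mono fun y hy => pdRe_z0 hy
    have e0i : (fun y => fderiv ℝ zRational y (Pi.single 0 Complex.I)) =ᶠ[nhds q]
        (fun y => (Complex.I * (1 + y 2) * Dd y
          + Complex.I * Nn y * (2 * starRingEnd ℂ (y 0) + starRingEnd ℂ (y 1))) / Dd y ^ 2) :=
      hev.mono fun y hy => pdIm_z0 hy
    have e1 : (fun y => fderiv ℝ zRational y (Pi.single 1 1)) =ᶠ[nhds q]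
        (fun y => ((-(y 2) - 1) * Dd y - Nn y * starRingEnd ℂ (y 0)) / Dd y ^ 2) :=
      hev.mono fun y hy => pdRe_z1 hy
    have e1i : (fun y => fderiv ℝ zRational y (Pi.single 1 Complex.I)) =ᶠ[nhds q]
        (fun y => (Complex.I * (y 2 - 1) * Dd y + Complex.I * Nn y * starRingEnd ℂ (y 0))
          / Dd y ^ 2) := hev.mono fun y hy => pdIm_z1 hy
    have e2 : (fun y => fderiv ℝ zRational y (Pi.single 2 1)) =ᶠ[nhds q]
        (fun y => (-(starRingEnd ℂ (y 0) + starRingEnd ℂ (y 1)) * Dd y - Nn y) / Dd y ^ 2) :=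
      hev.mono fun y hy => pdRe_z2 hy
    have e2i : (fun y => fderiv ℝ zRational y (Pi.single 2 Complex.I)) =ᶠ[nhds q]
        (fun y => (-Complex.I * (starRingEnd ℂ (y 0) + starRingEnd ℂ (y 1)) * Dd y
          + Complex.I * Nn y) / Dd y ^ 2) := hev.mono fun y hy => pdIm_z2 hy
    have hG0 := (((hasFDerivAt_const (1:ℂ) q).fun_sub (hasF_coord 2 q)).fun_mul (hDd q)).fun_sub
      ((hNn q).fun_mul (((hasF_conj 0 q).const_mul (2:ℂ)).fun_add (hasF_conj 1 q)))
    have hH0 := ((((hasFDerivAt_const (1:ℂ) q).fun_add (hasF_coord 2 q)).const_mul Complex.I).fun_mul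
      (hDd q)).fun_add (((hNn q).const_mul Complex.I).fun_mul
        (((hasF_conj 0 q).const_mul (2:ℂ)).fun_add (hasF_conj 1 q)))
    have hG1 := (((hasF_coord 2 q).fun_neg.fun_sub (hasFDerivAt_const (1:ℂ) q)).fun_mul (hDd q)).fun_sub
      ((hNn q).fun_mul (hasF_conj 0 q))
    have hH1 := ((((hasF_coord 2 q).fun_sub (hasFDerivAt_const (1:ℂ) q)).const_mul Complex.I).fun_mul
      (hDd q)).fun_add (((hNn q).const_mul Complex.I).fun_mul (hasF_conj 0 q))
    have hG2 := (((hasF_conj 0 q).fun_add (hasF_conj 1 q)).fun_neg.fun_mul (hDd q)).fun_sub (hNn q)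
    have hH2 := ((((hasF_conj 0 q).fun_add (hasF_conj 1 q)).const_mul (-Complex.I)).fun_mul
      (hDd q)).fun_add ((hNn q).const_mul Complex.I)
    simp only [lap, Fin.sum_univ_three, pdRe, pdIm]
    rw [e0.fderiv_eq, e0i.fderiv_eq, e1.fderiv_eq, e1i.fderiv_eq, e2.fderiv_eq, e2i.fderiv_eq]
    rw [pd_div hG0 (hDd2 q) hq2, pd_div hH0 (hDd2 q) hq2, pd_div hG1 (hDd2 q) hq2,
      pd_div hH1 (hDd2 q) hq2, pd_div hG2 (hDd2 q) hq2, pd_div hH2 (hDd2 q) hq2]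
    simp only [ContinuousLinearMap.add_apply, ContinuousLinearMap.sub_apply,
      ContinuousLinearMap.smul_apply, ContinuousLinearMap.neg_apply,
      ContinuousLinearMap.zero_apply, cP_apply, cC_apply, LDd,
      smul_eq_mul, Pi.single_apply, _root_.map_one, map_zero, Complex.conj_I, Fin.reduceEq, reduceIte]
    rw [← add_div, ← add_div, ← add_div, ← add_div,
      ← add_div, div_eq_zero_iff]
    left
    simp only [Nn, Dd]
    ring_nf
    simp only [Complex.I_sq]
    ring
  · -- conformality
    simp only [hwc, Fin.sum_univ_three, pdRe, pdIm]
    rw [pdRe_z0 hq', pdIm_z0 hq', pdRe_z1 hq', pdIm_z1 hq', pdRe_z2 hq', pdIm_z2 hq']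
    simp only [div_pow, ← add_div, div_eq_zero_iff]
    left
    simp only [RHMaux.Nn, RHMaux.Dd]
    ring_nf
    simp only [Complex.I_sq]
    ring
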